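/- Multiplicative decomposition of the wryness along a curve: let R, Q₀ : ℝ → ℝ^{3×3} be differentiable at t₀ with R(t) ∈ SO(3) and Q₀(t) ∈ SO(3) for all t ∈ ℝ, and set Q_e(t) = R(t)·Q₀(t)ᵀ. Then Q_e is differentiable at t₀, the matrices Q_e(t₀)ᵀQ_e′(t₀), R(t₀)ᵀR′(t₀) and Q₀(t₀)ᵀQ₀′(t₀) are skew-symmetric, Q_e(t₀)ᵀQ_e′(t₀) = Q₀(t₀)(R(t₀)ᵀR′(t₀))Q₀(t₀)ᵀ − Q₀(t₀)(Q₀(t₀)ᵀQ₀′(t₀))Q₀(t₀)ᵀ, and consequently axl(Q_e(t₀)ᵀQ_e′(t₀)) = Q₀(t₀)·(axl(R(t₀)ᵀR′(t₀)) − axl(Q₀(t₀)ᵀQ₀′(t₀))). -/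

import Mathlib

open Matrix

noncomputable section

/-- The axial vector `axl A = (A₃₂, A₁₃, A₂₁)` of a (skew-symmetric) matrix `A`,
characterized by `A v = axl A × v`. -/
def axl (A : Matrix (Fin 3) (Fin 3) ℝ) : Fin 3 → ℝ := ![A 2 1, A 0 2, A 1 0]

private lemma skew_aux (M : ℝ → Matrix (Fin 3) (Fin 3) ℝ)
    (M' : Matrix (Fin 3) (Fin 3) ℝ) (t₀ : ℝ)
    (h1 : ∀ t, (M t)ᵀ * M t = 1)
    (hd : ∀ i j, HasDerivAt (fun t => M t i j) (M' i j) t₀) :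
    ((M t₀)ᵀ * M')ᵀ = -((M t₀)ᵀ * M') := by
  ext i j
  have key : ∑ k, (M' k i * M t₀ k j + M t₀ k i * M' k j) = 0 := by
    have h2 : HasDerivAt (fun t => ∑ k, M t k i * M t k j)
        (∑ k, (M' k i * M t₀ k j + M t₀ k i * M' k j)) t₀ :=
      HasDerivAt.fun_sum fun k _ => (hd k i).mul (hd k j)
    have hc : (fun t => ∑ k, M t k i * M t k j)
        = fun _ => (1 : Matrix (Fin 3) (Fin 3) ℝ) i j := by
      funext t
      have := congrFun (congrFun (h1 t) i) j
      simpa [mul_apply] using this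
    have h3 : HasDerivAt (fun t => ∑ k, M t k i * M t k j) 0 t₀ := by
      rw [hc]; exact hasDerivAt_const _ _
    exact h2.unique h3
  have key2 : ∑ k, (M t₀ k j * M' k i + M t₀ k i * M' k j) = 0 := by
    rw [← key]; exact Finset.sum_congr rfl fun k _ => by ring
  simp only [transpose_apply, mul_apply, Matrix.neg_apply]
  have := key2
  rw [Finset.sum_add_distrib] at this
  linarith

private lemma axl_conj (Q S : Matrix (Fin 3) (Fin 3) ℝ)
    (h1 : Qᵀ * Q = 1) (h2 : Q.det = 1) (hS : Sᵀ = -S) :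
    axl (Q * S * Qᵀ) = Q.mulVec (axl S) := by
  have hadj : Qᵀ = adjugate Q := by
    have h3 : Q * adjugate Q = 1 := by rw [mul_adjugate, h2, one_smul]
    calc Qᵀ = Qᵀ * (Q * adjugate Q) := by rw [h3, mul_one]
      _ = (Qᵀ * Q) * adjugate Q := by rw [Matrix.mul_assoc]
      _ = adjugate Q := by rw [h1, one_mul]
  have key := hadj.trans (adjugate_fin_three Q)
  -- extract cofactor identities
  have e00 : Q 0 0 = Q 1 1 * Q 2 2 - Q 1 2 * Q 2 1 := by
    have := congrFun (congrFun key 0) 0; simpa using this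
  have e01 : Q 0 1 = -(Q 1 0 * Q 2 2) + Q 1 2 * Q 2 0 := by
    have := congrFun (congrFun key 1) 0; simpa using this
  have e02 : Q 0 2 = Q 1 0 * Q 2 1 - Q 1 1 * Q 2 0 := by
    have := congrFun (congrFun key 2) 0; simpa using this
  have e10 : Q 1 0 = -(Q 0 1 * Q 2 2) + Q 0 2 * Q 2 1 := by
    have := congrFun (congrFun key 0) 1; simpa using this
  have e11 : Q 1 1 = Q 0 0 * Q 2 2 - Q 0 2 * Q 2 0 := by
    have := congrFun (congrFun key 1) 1; simpa using this
  have e12 : Q 1 2 = -(Q 0 0 * Q 2 1) + Q 0 1 * Q 2 0 := by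
    have := congrFun (congrFun key 2) 1; simpa using this
  have e20 : Q 2 0 = Q 0 1 * Q 1 2 - Q 0 2 * Q 1 1 := by
    have := congrFun (congrFun key 0) 2; simpa using this
  have e21 : Q 2 1 = -(Q 0 0 * Q 1 2) + Q 0 2 * Q 1 0 := by
    have := congrFun (congrFun key 1) 2; simpa using this
  have e22 : Q 2 2 = Q 0 0 * Q 1 1 - Q 0 1 * Q 1 0 := by
    have := congrFun (congrFun key 2) 2; simpa using this
  -- skew entries
  have s00 : S 0 0 = 0 := by have := congrFun (congrFun hS 0) 0; simp at this; linarith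
  have s11 : S 1 1 = 0 := by have := congrFun (congrFun hS 1) 1; simp at this; linarith
  have s22 : S 2 2 = 0 := by have := congrFun (congrFun hS 2) 2; simp at this; linarith
  have s01 : S 0 1 = -S 1 0 := by have := congrFun (congrFun hS 1) 0; simpa using this
  have s02 : S 0 2 = -S 2 0 := by have := congrFun (congrFun hS 2) 0; simpa using this
  have s12 : S 1 2 = -S 2 1 := by have := congrFun (congrFun hS 2) 1; simpa using this
  funext i
  fin_cases i <;>
    simp [axl, Matrix.mulVec, dotProduct, mul_apply, transpose_apply, Fin.sum_univ_three]
  · rw [s00, s11, s22, s01, s02, s12, e00, e01, e02]; ring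
  · rw [s00, s11, s22, s01, s02, s12, e10, e11, e12]; ring
  · rw [s00, s11, s22, s01, s02, s12, e20, e21, e22]; ring

theorem wryness_multiplicative_decomposition
    (R Q₀ : ℝ → Matrix (Fin 3) (Fin 3) ℝ)
    (R' Q₀' : Matrix (Fin 3) (Fin 3) ℝ) (t₀ : ℝ)
    (hR : ∀ t, (R t)ᵀ * R t = 1 ∧ (R t).det = 1)
    (hQ₀ : ∀ t, (Q₀ t)ᵀ * Q₀ t = 1 ∧ (Q₀ t).det = 1)
    (hRderiv : ∀ i j, HasDerivAt (fun t => R t i j) (R' i j) t₀)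
    (hQ₀deriv : ∀ i j, HasDerivAt (fun t => Q₀ t i j) (Q₀' i j) t₀) :
    -- `Q_e(t) = R(t) Q₀(t)ᵀ` is differentiable at `t₀`,
    -- with derivative `Q_e'(t₀) = R' Q₀(t₀)ᵀ + R(t₀) Q₀'ᵀ`
    (∀ i j, HasDerivAt (fun t => (R t * (Q₀ t)ᵀ) i j)
        ((R' * (Q₀ t₀)ᵀ + R t₀ * Q₀'ᵀ) i j) t₀) ∧
    -- `Q_e(t₀)ᵀ Q_e'(t₀)` is skew-symmetric
    ((R t₀ * (Q₀ t₀)ᵀ)ᵀ * (R' * (Q₀ t₀)ᵀ + R t₀ * Q₀'ᵀ))ᵀ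
      = -((R t₀ * (Q₀ t₀)ᵀ)ᵀ * (R' * (Q₀ t₀)ᵀ + R t₀ * Q₀'ᵀ)) ∧
    -- `R(t₀)ᵀ R'(t₀)` is skew-symmetric
    ((R t₀)ᵀ * R')ᵀ = -((R t₀)ᵀ * R') ∧
    -- `Q₀(t₀)ᵀ Q₀'(t₀)` is skew-symmetric
    ((Q₀ t₀)ᵀ * Q₀')ᵀ = -((Q₀ t₀)ᵀ * Q₀') ∧
    -- the multiplicative decomposition
    (R t₀ * (Q₀ t₀)ᵀ)ᵀ * (R' * (Q₀ t₀)ᵀ + R t₀ * Q₀'ᵀ)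
      = Q₀ t₀ * ((R t₀)ᵀ * R') * (Q₀ t₀)ᵀ - Q₀ t₀ * ((Q₀ t₀)ᵀ * Q₀') * (Q₀ t₀)ᵀ ∧
    -- consequently, on the level of axial vectors
    axl ((R t₀ * (Q₀ t₀)ᵀ)ᵀ * (R' * (Q₀ t₀)ᵀ + R t₀ * Q₀'ᵀ))
      = (Q₀ t₀).mulVec (axl ((R t₀)ᵀ * R') - axl ((Q₀ t₀)ᵀ * Q₀')) := by
  have hRo := (hR t₀).1
  have hQo := (hQ₀ t₀).1
  have hQQ : Q₀ t₀ * (Q₀ t₀)ᵀ = 1 := mul_eq_one_comm.mp hQo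
  have hskewR : ((R t₀)ᵀ * R')ᵀ = -((R t₀)ᵀ * R') := skew_aux R R' t₀ (fun t => (hR t).1) hRderiv
  have hskewQ : ((Q₀ t₀)ᵀ * Q₀')ᵀ = -((Q₀ t₀)ᵀ * Q₀') :=
    skew_aux Q₀ Q₀' t₀ (fun t => (hQ₀ t).1) hQ₀deriv
  -- key algebraic identity: Q₀'ᵀ * Q₀ t₀ = -((Q₀ t₀)ᵀ * Q₀')
  have hQ'Q : Q₀'ᵀ * Q₀ t₀ = -((Q₀ t₀)ᵀ * Q₀') := by
    calc Q₀'ᵀ * Q₀ t₀ = ((Q₀ t₀)ᵀ * Q₀')ᵀ := by rw [transpose_mul, transpose_transpose]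
      _ = -((Q₀ t₀)ᵀ * Q₀') := hskewQ
  -- the decomposition
  have hdecomp : (R t₀ * (Q₀ t₀)ᵀ)ᵀ * (R' * (Q₀ t₀)ᵀ + R t₀ * Q₀'ᵀ)
      = Q₀ t₀ * ((R t₀)ᵀ * R') * (Q₀ t₀)ᵀ - Q₀ t₀ * ((Q₀ t₀)ᵀ * Q₀') * (Q₀ t₀)ᵀ := by
    have step1 : (R t₀ * (Q₀ t₀)ᵀ)ᵀ * (R' * (Q₀ t₀)ᵀ + R t₀ * Q₀'ᵀ)
        = Q₀ t₀ * ((R t₀)ᵀ * R') * (Q₀ t₀)ᵀ + Q₀ t₀ * (((R t₀)ᵀ * R t₀) * Q₀'ᵀ) := by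
      rw [transpose_mul, transpose_transpose, mul_add]
      simp only [Matrix.mul_assoc]
    rw [step1, hRo, one_mul]
    congr 1
    calc Q₀ t₀ * Q₀'ᵀ
        = Q₀ t₀ * Q₀'ᵀ * (Q₀ t₀ * (Q₀ t₀)ᵀ) := by rw [hQQ, mul_one]
      _ = Q₀ t₀ * (Q₀'ᵀ * Q₀ t₀) * (Q₀ t₀)ᵀ := by simp only [Matrix.mul_assoc]
      _ = Q₀ t₀ * -((Q₀ t₀)ᵀ * Q₀') * (Q₀ t₀)ᵀ := by rw [hQ'Q]
      _ = -(Q₀ t₀ * ((Q₀ t₀)ᵀ * Q₀') * (Q₀ t₀)ᵀ) := by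
          rw [Matrix.mul_neg, Matrix.neg_mul]
  refine ⟨?_, ?_, hskewR, hskewQ, hdecomp, ?_⟩
  · intro i j
    have h : HasDerivAt (fun t => ∑ k, R t i k * Q₀ t j k)
        (∑ k, (R' i k * Q₀ t₀ j k + R t₀ i k * Q₀' j k)) t₀ :=
      HasDerivAt.fun_sum fun k _ => (hRderiv i k).mul (hQ₀deriv j k)
    have hfun : (fun t => (R t * (Q₀ t)ᵀ) i j) = fun t => ∑ k, R t i k * Q₀ t j k := by
      funext t; simp [mul_apply]
    have hval : (R' * (Q₀ t₀)ᵀ + R t₀ * Q₀'ᵀ) i j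
        = ∑ k, (R' i k * Q₀ t₀ j k + R t₀ i k * Q₀' j k) := by
      simp [mul_apply, Finset.sum_add_distrib]
    rw [hfun, hval]
    exact h
  · -- skewness of Q_eᵀ Q_e'
    rw [hdecomp]
    have hsub : Q₀ t₀ * ((R t₀)ᵀ * R') * (Q₀ t₀)ᵀ - Q₀ t₀ * ((Q₀ t₀)ᵀ * Q₀') * (Q₀ t₀)ᵀ
        = Q₀ t₀ * (((R t₀)ᵀ * R') - ((Q₀ t₀)ᵀ * Q₀')) * (Q₀ t₀)ᵀ := by
      rw [Matrix.mul_sub, Matrix.sub_mul]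
    rw [hsub]
    have hskewS : (((R t₀)ᵀ * R') - ((Q₀ t₀)ᵀ * Q₀'))ᵀ
        = -((((R t₀)ᵀ * R') - ((Q₀ t₀)ᵀ * Q₀'))) := by
      rw [transpose_sub, hskewR, hskewQ, neg_sub]; abel
    set S := ((R t₀)ᵀ * R') - ((Q₀ t₀)ᵀ * Q₀') with hSdef
    calc (Q₀ t₀ * S * (Q₀ t₀)ᵀ)ᵀ
        = Q₀ t₀ * Sᵀ * (Q₀ t₀)ᵀ := by
          rw [transpose_mul, transpose_mul, transpose_transpose, Matrix.mul_assoc]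
      _ = -(Q₀ t₀ * S * (Q₀ t₀)ᵀ) := by rw [hskewS, Matrix.mul_neg, Matrix.neg_mul]
  · rw [hdecomp]
    have hsub : Q₀ t₀ * ((R t₀)ᵀ * R') * (Q₀ t₀)ᵀ - Q₀ t₀ * ((Q₀ t₀)ᵀ * Q₀') * (Q₀ t₀)ᵀ
        = Q₀ t₀ * (((R t₀)ᵀ * R') - ((Q₀ t₀)ᵀ * Q₀')) * (Q₀ t₀)ᵀ := by
      rw [Matrix.mul_sub, Matrix.sub_mul]
    rw [hsub]
    have hskewS : (((R t₀)ᵀ * R') - ((Q₀ t₀)ᵀ * Q₀'))ᵀ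
        = -((((R t₀)ᵀ * R') - ((Q₀ t₀)ᵀ * Q₀'))) := by
      rw [transpose_sub, hskewR, hskewQ, neg_sub]; abel
    rw [axl_conj (Q₀ t₀) _ hQo (hQ₀ t₀).2 hskewS]
    have haxl : axl (((R t₀)ᵀ * R') - ((Q₀ t₀)ᵀ * Q₀'))
        = axl ((R t₀)ᵀ * R') - axl ((Q₀ t₀)ᵀ * Q₀') := by
      funext i
      fin_cases i <;> simp [axl, Matrix.sub_apply]
    rw [haxl]

end
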